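/- Let a_1 > a_2 > ⋯ > a_n be real numbers and w_1, …, w_n strictly positive reals. Then the rational function R(λ) = λ + Σ_{j=1}^n w_j/(a_j - λ) has exactly n+1 real zeros λ_1 > a_1 > λ_2 > a_2 > ⋯ > a_n > λ_{n+1}, and moreover Σ_{l=1}^{n+1} λ_l = Σ_{l=1}^n a_l. -/

import Mathlib

open Filter Topology Polynomial Finset

private lemma termMono {c x y v : ℝ} (hxy : x < y) (hc : c ∉ Set.Icc x y) (hv : 0 ≤ v) :
    v / (c - x) ≤ v / (c - y) := by
  rw [Set.mem_Icc, not_and_or, not_le, not_le] at hc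
  rcases hc with h | h
  · have h1 : (0:ℝ) < x - c := by linarith
    have key : v / (y - c) ≤ v / (x - c) :=
      div_le_div_of_nonneg_left hv h1 (by linarith)
    have e1 : v / (c - x) = -(v / (x - c)) := by
      rw [show c - x = -(x - c) by ring, div_neg]
    have e2 : v / (c - y) = -(v / (y - c)) := by
      rw [show c - y = -(y - c) by ring, div_neg]
    rw [e1, e2]; linarith
  · have h1 : (0:ℝ) < c - y := by linarith
    exact div_le_div_of_nonneg_left hv h1 (by linarith)

private lemma RltAux {n : ℕ} (a w : Fin n → ℝ) (hw : ∀ i, 0 < w i) {x y : ℝ}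
    (hxy : x < y) (hpole : ∀ j, a j ∉ Set.Icc x y) :
    x + ∑ j, w j / (a j - x) < y + ∑ j, w j / (a j - y) := by
  have : ∑ j, w j / (a j - x) ≤ ∑ j, w j / (a j - y) :=
    Finset.sum_le_sum fun j _ => termMono hxy (hpole j) (hw j).le
  linarith

private lemma RrootAux {n : ℕ} (a w : Fin n → ℝ) {x y : ℝ} (hxy : x < y)
    (hpole : ∀ j, a j ∉ Set.Icc x y)
    (h1 : x + ∑ j, w j / (a j - x) < 0) (h2 : 0 < y + ∑ j, w j / (a j - y)) :
    ∃ z ∈ Set.Ioo x y, z + ∑ j, w j / (a j - z) = 0 := by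
  have hcont : ContinuousOn (fun t : ℝ => t + ∑ j, w j / (a j - t)) (Set.Icc x y) := by
    refine continuousOn_id.add (continuousOn_finset_sum _ fun j _ => ?_)
    refine continuousOn_const.div (continuousOn_const.sub continuousOn_id) ?_
    intro z hz
    exact sub_ne_zero.2 fun h => hpole j (h ▸ hz)
  have h0 : (0:ℝ) ∈ Set.Ioo (x + ∑ j, w j / (a j - x)) (y + ∑ j, w j / (a j - y)) := ⟨h1, h2⟩
  obtain ⟨z, hz, hz0⟩ := intermediate_value_Ioo hxy.le hcont h0
  exact ⟨z, hz, hz0⟩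

private lemma tendstoRtop {n : ℕ} (a w : Fin n → ℝ) :
    Tendsto (fun x : ℝ => x + ∑ j, w j / (a j - x)) atTop atTop := by
  have hsum : Tendsto (fun x : ℝ => ∑ j, w j / (a j - x)) atTop (𝓝 0) := by
    have := tendsto_finset_sum (Finset.univ : Finset (Fin n))
      (f := fun j (x : ℝ) => w j / (a j - x)) (a := fun _ => (0:ℝ))
      (fun j _ => by
        have h2 : Tendsto (fun x : ℝ => x - a j) atTop atTop :=
          tendsto_atTop_add_const_right _ _ tendsto_id
        have h5 : Tendsto (fun x : ℝ => -(w j / (x - a j))) atTop (𝓝 0) := by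
          simpa using (Filter.Tendsto.div_atTop (tendsto_const_nhds (x := w j)) h2).neg
        exact h5.congr fun x => by
          show -(w j / (x - a j)) = w j / (a j - x)
          rw [show a j - x = -(x - a j) by ring, div_neg])
    simpa using this
  exact Filter.Tendsto.atTop_add tendsto_id hsum

private lemma tendstoRbot {n : ℕ} (a w : Fin n → ℝ) :
    Tendsto (fun x : ℝ => x + ∑ j, w j / (a j - x)) atBot atBot := by
  have hsum : Tendsto (fun x : ℝ => ∑ j, w j / (a j - x)) atBot (𝓝 0) := by
    have := tendsto_finset_sum (Finset.univ : Finset (Fin n))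
      (f := fun j (x : ℝ) => w j / (a j - x)) (a := fun _ => (0:ℝ))
      (fun j _ => by
        have h2 : Tendsto (fun x : ℝ => a j - x) atBot atTop := by
          have : Tendsto (fun x : ℝ => -x) atBot atTop := tendsto_neg_atBot_atTop
          simpa [sub_eq_add_neg] using tendsto_atTop_add_const_left _ (a j) this
        exact Filter.Tendsto.div_atTop (tendsto_const_nhds (x := w j)) h2)
    simpa using this
  exact Filter.Tendsto.atBot_add tendsto_id hsum

private lemma tendstoRpoleRight {n : ℕ} (a w : Fin n → ℝ) (hw : ∀ i, 0 < w i)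
    (hinj : Function.Injective a) (i : Fin n) :
    Tendsto (fun x : ℝ => x + ∑ j, w j / (a j - x)) (𝓝[>] (a i)) atBot := by
  have hsplit : (fun x : ℝ => x + ∑ j, w j / (a j - x))
      = fun x => (x + ∑ j ∈ Finset.univ.erase i, w j / (a j - x)) + w i / (a i - x) := by
    funext x
    rw [← Finset.sum_erase_add _ _ (Finset.mem_univ i)]
    ring
  rw [hsplit]
  have hF : Tendsto (fun x : ℝ => x + ∑ j ∈ Finset.univ.erase i, w j / (a j - x)) (𝓝[>] (a i))
      (𝓝 (a i + ∑ j ∈ Finset.univ.erase i, w j / (a j - a i))) := by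
    have hsum : Tendsto (fun x : ℝ => ∑ j ∈ Finset.univ.erase i, w j / (a j - x)) (𝓝 (a i))
        (𝓝 (∑ j ∈ Finset.univ.erase i, w j / (a j - a i))) := by
      refine tendsto_finset_sum _ fun j hj => ?_
      have hne : a j - a i ≠ 0 := by
        have : a j ≠ a i := fun h => (Finset.mem_erase.1 hj).1 (hinj h)
        simpa [sub_ne_zero] using this
      exact (continuousAt_const.div (continuousAt_const.sub continuousAt_id) hne)
    exact (tendsto_id.add hsum).mono_left nhdsWithin_le_nhds
  have hG : Tendsto (fun x : ℝ => w i / (a i - x)) (𝓝[>] (a i)) atBot := by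
    have h1 : Tendsto (fun x : ℝ => x - a i) (𝓝[>] (a i)) (𝓝[>] 0) := by
      rw [tendsto_nhdsWithin_iff]
      constructor
      · have : ContinuousAt (fun x : ℝ => x - a i) (a i) :=
          continuousAt_id.sub continuousAt_const
        simpa using this.tendsto.mono_left nhdsWithin_le_nhds
      · exact eventually_mem_nhdsWithin.mono fun x hx => Set.mem_Ioi.2 (sub_pos.2 hx)
    have h2 : Tendsto (fun x : ℝ => (x - a i)⁻¹) (𝓝[>] (a i)) atTop :=
      tendsto_inv_nhdsGT_zero.comp h1
    have h3 : Tendsto (fun x : ℝ => w i * (x - a i)⁻¹) (𝓝[>] (a i)) atTop :=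
      Filter.Tendsto.const_mul_atTop (hw i) h2
    have h4 : Tendsto (fun x : ℝ => -(w i * (x - a i)⁻¹)) (𝓝[>] (a i)) atBot :=
      tendsto_neg_atTop_atBot.comp h3
    have e : (fun x : ℝ => w i / (a i - x)) = fun x => -(w i * (x - a i)⁻¹) := by
      funext x
      rw [show a i - x = -(x - a i) by ring, div_neg, div_eq_mul_inv]
    rw [e]; exact h4
  exact hF.add_atBot hG

private lemma tendstoRpoleLeft {n : ℕ} (a w : Fin n → ℝ) (hw : ∀ i, 0 < w i)
    (hinj : Function.Injective a) (i : Fin n) :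
    Tendsto (fun x : ℝ => x + ∑ j, w j / (a j - x)) (𝓝[<] (a i)) atTop := by
  have hsplit : (fun x : ℝ => x + ∑ j, w j / (a j - x))
      = fun x => (x + ∑ j ∈ Finset.univ.erase i, w j / (a j - x)) + w i / (a i - x) := by
    funext x
    rw [← Finset.sum_erase_add _ _ (Finset.mem_univ i)]
    ring
  rw [hsplit]
  have hF : Tendsto (fun x : ℝ => x + ∑ j ∈ Finset.univ.erase i, w j / (a j - x)) (𝓝[<] (a i))
      (𝓝 (a i + ∑ j ∈ Finset.univ.erase i, w j / (a j - a i))) := by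
    have hsum : Tendsto (fun x : ℝ => ∑ j ∈ Finset.univ.erase i, w j / (a j - x)) (𝓝 (a i))
        (𝓝 (∑ j ∈ Finset.univ.erase i, w j / (a j - a i))) := by
      refine tendsto_finset_sum _ fun j hj => ?_
      have hne : a j - a i ≠ 0 := by
        have : a j ≠ a i := fun h => (Finset.mem_erase.1 hj).1 (hinj h)
        simpa [sub_ne_zero] using this
      exact (continuousAt_const.div (continuousAt_const.sub continuousAt_id) hne)
    exact (tendsto_id.add hsum).mono_left nhdsWithin_le_nhds
  have hG : Tendsto (fun x : ℝ => w i / (a i - x)) (𝓝[<] (a i)) atTop := by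
    have h1 : Tendsto (fun x : ℝ => a i - x) (𝓝[<] (a i)) (𝓝[>] 0) := by
      rw [tendsto_nhdsWithin_iff]
      constructor
      · have : ContinuousAt (fun x : ℝ => a i - x) (a i) :=
          continuousAt_const.sub continuousAt_id
        simpa using this.tendsto.mono_left nhdsWithin_le_nhds
      · exact eventually_mem_nhdsWithin.mono fun x hx => Set.mem_Ioi.2 (sub_pos.2 hx)
    have h2 : Tendsto (fun x : ℝ => (a i - x)⁻¹) (𝓝[<] (a i)) atTop :=
      tendsto_inv_nhdsGT_zero.comp h1
    have h3 : Tendsto (fun x : ℝ => w i * (a i - x)⁻¹) (𝓝[<] (a i)) atTop :=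
      Filter.Tendsto.const_mul_atTop (hw i) h2
    have e : (fun x : ℝ => w i / (a i - x)) = fun x => w i * (a i - x)⁻¹ := by
      funext x; rw [div_eq_mul_inv]
    rw [e]; exact h3
  exact hF.add_atTop hG

private def inGap {n : ℕ} (a : Fin n → ℝ) (i : Fin (n + 1)) (x : ℝ) : Prop :=
  ∀ j : Fin n, ((j : ℕ) < (i : ℕ) → x < a j) ∧ ((i : ℕ) ≤ (j : ℕ) → a j < x)

private lemma inGap_Icc {n : ℕ} {a : Fin n → ℝ} {i : Fin (n + 1)} {u v : ℝ}
    (hu : inGap a i u) (hv : inGap a i v) (j : Fin n) : a j ∉ Set.Icc u v := by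
  intro hj
  rcases lt_or_ge (j : ℕ) (i : ℕ) with h | h
  · exact absurd ((hv j).1 h) (not_lt.2 hj.2)
  · exact absurd ((hu j).2 h) (not_lt.2 hj.1)

/-- For `a_1 > ⋯ > a_n` real and `w_j > 0`, the rational function
`R(λ) = λ + Σ_j w_j / (a_j - λ)` has exactly `n + 1` real zeros
`λ_1 > a_1 > λ_2 > a_2 > ⋯ > a_n > λ_{n+1}`, and moreover
`Σ_{l=1}^{n+1} λ_l = Σ_{l=1}^n a_l`. -/
theorem stmt3 {n : ℕ} (a : Fin n → ℝ) (w : Fin n → ℝ)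
    (ha : StrictAnti a) (hw : ∀ i, 0 < w i) :
    ∃ l : Fin (n + 1) → ℝ, StrictAnti l ∧
      (∀ i : Fin n, a i < l i.castSucc ∧ l i.succ < a i) ∧
      (∀ i : Fin (n + 1), (∀ j, l i ≠ a j) ∧ l i + ∑ j, w j / (a j - l i) = 0) ∧
      (∀ x : ℝ, (∀ j, x ≠ a j) → x + ∑ j, w j / (a j - x) = 0 → ∃ i, x = l i) ∧
      ∑ i, l i = ∑ j, a j := by
  classical
  have hinj : Function.Injective a := ha.injective
  -- Step 1: existence of a point with negative value in each gap
  have hlow : ∀ i : Fin (n + 1), ∃ x, inGap a i x ∧ x + ∑ j, w j / (a j - x) < 0 := by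
    intro i
    rcases lt_or_ge (i : ℕ) n with h | h
    · have h1 : ∀ᶠ x in 𝓝[>] (a ⟨(i : ℕ), h⟩), x + ∑ j, w j / (a j - x) < 0 :=
        (tendstoRpoleRight a w hw hinj ⟨(i : ℕ), h⟩).eventually (eventually_lt_atBot 0)
      have h2 : ∀ᶠ x in 𝓝[>] (a ⟨(i : ℕ), h⟩), inGap a i x := by
        have : ∀ᶠ x in 𝓝[>] (a ⟨(i : ℕ), h⟩),
            ∀ j : Fin n, ((j : ℕ) < (i : ℕ) → x < a j) ∧ ((i : ℕ) ≤ (j : ℕ) → a j < x) := by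
          refine eventually_all.2 fun j => ?_
          rcases lt_or_ge (j : ℕ) (i : ℕ) with hj | hj
          · have haj : a ⟨(i : ℕ), h⟩ < a j := ha (show j < ⟨(i : ℕ), h⟩ from hj)
            filter_upwards [mem_nhdsWithin_of_mem_nhds (Iio_mem_nhds haj)] with x hx
            exact ⟨fun _ => hx, fun hc => absurd hc (by omega)⟩
          · have haj : a j ≤ a ⟨(i : ℕ), h⟩ := ha.antitone (show (⟨(i : ℕ), h⟩ : Fin n) ≤ j from hj)
            filter_upwards [self_mem_nhdsWithin] with x hx
            exact ⟨fun hc => absurd hc (by omega), fun _ => lt_of_le_of_lt haj hx⟩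
        exact this
      obtain ⟨x, hx1, hx2⟩ := (h2.and h1).exists
      exact ⟨x, hx1, hx2⟩
    · have h1 : ∀ᶠ x in (atBot : Filter ℝ), x + ∑ j, w j / (a j - x) < 0 :=
        (tendstoRbot a w).eventually (eventually_lt_atBot 0)
      have h2 : ∀ᶠ x in (atBot : Filter ℝ), inGap a i x := by
        have : ∀ᶠ x in (atBot : Filter ℝ),
            ∀ j : Fin n, ((j : ℕ) < (i : ℕ) → x < a j) ∧ ((i : ℕ) ≤ (j : ℕ) → a j < x) := by
          refine eventually_all.2 fun j => ?_
          filter_upwards [eventually_lt_atBot (a j)] with x hx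
          exact ⟨fun _ => hx, fun hc => absurd hc (by have := j.isLt; omega)⟩
        exact this
      obtain ⟨x, hx1, hx2⟩ := (h2.and h1).exists
      exact ⟨x, hx1, hx2⟩
  -- Step 2: existence of a point with positive value in each gap
  have hhigh : ∀ i : Fin (n + 1), ∃ x, inGap a i x ∧ 0 < x + ∑ j, w j / (a j - x) := by
    intro i
    rcases Nat.eq_zero_or_pos (i : ℕ) with h | h
    · have h1 : ∀ᶠ x in (atTop : Filter ℝ), 0 < x + ∑ j, w j / (a j - x) :=
        (tendstoRtop a w).eventually (eventually_gt_atTop 0)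
      have h2 : ∀ᶠ x in (atTop : Filter ℝ), inGap a i x := by
        have : ∀ᶠ x in (atTop : Filter ℝ),
            ∀ j : Fin n, ((j : ℕ) < (i : ℕ) → x < a j) ∧ ((i : ℕ) ≤ (j : ℕ) → a j < x) := by
          refine eventually_all.2 fun j => ?_
          filter_upwards [eventually_gt_atTop (a j)] with x hx
          exact ⟨fun hc => absurd hc (by omega), fun _ => hx⟩
        exact this
      obtain ⟨x, hx1, hx2⟩ := (h2.and h1).exists
      exact ⟨x, hx1, hx2⟩
    · have hlt : (i : ℕ) - 1 < n := by have := i.isLt; omega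
      have h1 : ∀ᶠ x in 𝓝[<] (a ⟨(i : ℕ) - 1, hlt⟩), 0 < x + ∑ j, w j / (a j - x) :=
        (tendstoRpoleLeft a w hw hinj ⟨(i : ℕ) - 1, hlt⟩).eventually (eventually_gt_atTop 0)
      have h2 : ∀ᶠ x in 𝓝[<] (a ⟨(i : ℕ) - 1, hlt⟩), inGap a i x := by
        have : ∀ᶠ x in 𝓝[<] (a ⟨(i : ℕ) - 1, hlt⟩),
            ∀ j : Fin n, ((j : ℕ) < (i : ℕ) → x < a j) ∧ ((i : ℕ) ≤ (j : ℕ) → a j < x) := by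
          refine eventually_all.2 fun j => ?_
          rcases lt_or_ge (j : ℕ) (i : ℕ) with hj | hj
          · have haj : a ⟨(i : ℕ) - 1, hlt⟩ ≤ a j :=
              ha.antitone (show j ≤ (⟨(i : ℕ) - 1, hlt⟩ : Fin n) from by
                show (j : ℕ) ≤ (i : ℕ) - 1; omega)
            filter_upwards [self_mem_nhdsWithin] with x hx
            exact ⟨fun _ => lt_of_lt_of_le hx haj, fun hc => absurd hc (by omega)⟩
          · have haj : a j < a ⟨(i : ℕ) - 1, hlt⟩ :=
              ha (show (⟨(i : ℕ) - 1, hlt⟩ : Fin n) < j from by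
                show (i : ℕ) - 1 < (j : ℕ); omega)
            filter_upwards [mem_nhdsWithin_of_mem_nhds (Ioi_mem_nhds haj)] with x hx
            exact ⟨fun hc => absurd hc (by omega), fun _ => hx⟩
        exact this
      obtain ⟨x, hx1, hx2⟩ := (h2.and h1).exists
      exact ⟨x, hx1, hx2⟩
  -- Step 3: a root in each gap
  have hex : ∀ i : Fin (n + 1), ∃ x, inGap a i x ∧ x + ∑ j, w j / (a j - x) = 0 := by
    intro i
    obtain ⟨x1, hx1g, hx1⟩ := hlow i
    obtain ⟨x2, hx2g, hx2⟩ := hhigh i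
    have hlt : x1 < x2 := by
      by_contra hc
      push_neg at hc
      rcases eq_or_lt_of_le hc with he | hlt2
      · rw [he] at hx2; linarith
      · have := RltAux a w hw hlt2 (inGap_Icc hx2g hx1g); linarith
    obtain ⟨z, hz, hz0⟩ := RrootAux a w hlt (inGap_Icc hx1g hx2g) hx1 hx2
    refine ⟨z, fun j => ?_, hz0⟩
    constructor
    · intro hj; exact hz.2.trans ((hx2g j).1 hj)
    · intro hj; exact ((hx1g j).2 hj).trans hz.1
  choose l hlg hl0 using hex
  -- derived facts
  have hls : StrictAnti l := by
    intro i j hij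
    have hin : (i : ℕ) < n := lt_of_lt_of_le hij (Nat.lt_succ_iff.1 j.isLt)
    have h1 : l j < a ⟨(i : ℕ), hin⟩ := (hlg j ⟨(i : ℕ), hin⟩).1 hij
    have h2 : a ⟨(i : ℕ), hin⟩ < l i := (hlg i ⟨(i : ℕ), hin⟩).2 (le_refl _)
    exact h1.trans h2
  have hne : ∀ (i : Fin (n + 1)) (j : Fin n), l i ≠ a j := by
    intro i j heq
    rcases lt_or_ge (j : ℕ) (i : ℕ) with h | h
    · exact absurd ((hlg i j).1 h) (by rw [heq]; exact lt_irrefl _)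
    · exact absurd ((hlg i j).2 h) (by rw [heq]; exact lt_irrefl _)
  have hcompl : ∀ x : ℝ, (∀ j, x ≠ a j) → x + ∑ j, w j / (a j - x) = 0 → ∃ i, x = l i := by
    intro x hx hx0
    set T : Finset (Fin n) := Finset.univ.filter (fun j => x < a j) with hT
    have hdc : ∀ {j k : Fin n}, j ∈ T → k ≤ j → k ∈ T := by
      intro j k hj hkj
      rw [hT, Finset.mem_filter] at hj ⊢
      exact ⟨Finset.mem_univ _, lt_of_lt_of_le hj.2 (ha.antitone hkj)⟩
    have hTiff : ∀ j : Fin n, j ∈ T ↔ (j : ℕ) < T.card := by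
      intro j
      constructor
      · intro hj
        have hsub : Finset.Iic j ⊆ T := fun k hk => hdc hj (Finset.mem_Iic.1 hk)
        have := Finset.card_le_card hsub
        rw [Fin.card_Iic] at this; omega
      · intro hj
        by_contra hjn
        have hsub : T ⊆ Finset.Iio j := by
          intro k hk
          rw [Finset.mem_Iio]
          by_contra hkj
          exact hjn (hdc hk (not_lt.1 hkj))
        have := Finset.card_le_card hsub
        rw [Fin.card_Iio] at this; omega
    have hcard : T.card ≤ n := by
      have := Finset.card_le_card (Finset.subset_univ T)
      simpa using this
    set i₀ : Fin (n + 1) := ⟨T.card, Nat.lt_succ_of_le hcard⟩ with hi₀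
    have hv : (i₀ : ℕ) = T.card := rfl
    have hxg : inGap a i₀ x := by
      intro j
      constructor
      · intro hj
        have : j ∈ T := (hTiff j).2 hj
        exact (Finset.mem_filter.1 this).2
      · intro hj
        have hnm : j ∉ T := fun hc => by
          have h5 := (hTiff j).1 hc
          rw [hv] at hj; omega
        have hnlt : ¬ x < a j := fun hc => hnm (by rw [hT, Finset.mem_filter]; exact ⟨Finset.mem_univ _, hc⟩)
        exact lt_of_le_of_ne (not_lt.1 hnlt) (Ne.symm (hx j))
    refine ⟨i₀, ?_⟩
    by_contra hne2
    rcases lt_or_gt_of_ne hne2 with hlt | hgt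
    · have := RltAux a w hw hlt (inGap_Icc hxg (hlg i₀))
      rw [hx0, hl0 i₀] at this; exact lt_irrefl _ this
    · have := RltAux a w hw hgt (inGap_Icc (hlg i₀) hxg)
      rw [hx0, hl0 i₀] at this; exact lt_irrefl _ this
  refine ⟨l, hls, ?_, fun i => ⟨hne i, hl0 i⟩, hcompl, ?_⟩
  · intro i
    constructor
    · exact (hlg i.castSucc i).2 (by simp)
    · exact (hlg i.succ i).1 (by simp)
  · -- Vieta: sum of roots
    rcases Nat.eq_zero_or_pos n with hn0 | hn0
    · subst hn0
      have h0 : l 0 = 0 := by have := hl0 0; simpa using this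
      simp [h0]
    obtain ⟨m, rfl⟩ : ∃ m, n = m + 1 := ⟨n - 1, by omega⟩
    set q : Polynomial ℝ := ∏ j, (X - C (a j)) with hq
    set P : Polynomial ℝ :=
      X * q - ∑ j, C (w j) * ∏ k ∈ Finset.univ.erase j, (X - C (a k)) with hPdef
    have hqm : q.Monic := monic_prod_of_monic _ _ fun j _ => monic_X_sub_C _
    have hqdeg : q.natDegree = m + 1 := by
      rw [hq, natDegree_prod_of_monic _ _ fun j _ => monic_X_sub_C _]
      simp [natDegree_X_sub_C]
    have hXq : (X * q).Monic := (monic_X).mul hqm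
    have hXqdeg : (X * q).natDegree = m + 2 := by
      rw [monic_X.natDegree_mul hqm, natDegree_X, hqdeg]; omega
    have hXqdeg' : (X * q).degree = ((m + 2 : ℕ) : WithBot ℕ) := by
      rw [degree_eq_natDegree hXq.ne_zero, hXqdeg]
    have hsum_deg : (∑ j, C (w j) * ∏ k ∈ Finset.univ.erase j, (X - C (a k))).degree
        < ((m + 1 : ℕ) : WithBot ℕ) := by
      refine lt_of_le_of_lt (degree_sum_le _ _) ?_
      rw [Finset.sup_lt_iff (by exact_mod_cast WithBot.bot_lt_coe (m + 1))]
      intro j _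
      refine lt_of_le_of_lt (degree_mul_le _ _) ?_
      have h2 : (∏ k ∈ Finset.univ.erase j, (X - C (a k))).degree ≤ ((m : ℕ) : WithBot ℕ) := by
        refine le_trans (degree_prod_le _ _) ?_
        have : ∀ k ∈ Finset.univ.erase j, (X - C (a k)).degree = (1 : WithBot ℕ) :=
          fun k _ => degree_X_sub_C _
        rw [Finset.sum_congr rfl this, Finset.sum_const,
          Finset.card_erase_of_mem (Finset.mem_univ j), Finset.card_univ]
        simp
      have h1 : (C (w j)).degree ≤ 0 := degree_C_le
      have h3 : (C (w j)).degree + (∏ k ∈ Finset.univ.erase j, (X - C (a k))).degree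
          ≤ ((m : ℕ) : WithBot ℕ) := by
        calc (C (w j)).degree + (∏ k ∈ Finset.univ.erase j, (X - C (a k))).degree
            ≤ 0 + ((m : ℕ) : WithBot ℕ) := add_le_add h1 h2
          _ = ((m : ℕ) : WithBot ℕ) := zero_add _
      exact lt_of_le_of_lt h3 (by exact_mod_cast Nat.lt_succ_self m)
    have hsd2 : (∑ j, C (w j) * ∏ k ∈ Finset.univ.erase j, (X - C (a k))).degree
        < (X * q).degree := by
      rw [hXqdeg']
      exact lt_trans hsum_deg (by exact_mod_cast Nat.lt_succ_self (m + 1))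
    have hPm : P.Monic := by
      rw [hPdef, sub_eq_add_neg]
      refine hXq.add_of_left ?_
      rw [degree_neg]
      exact hsd2
    have hPdeg : P.natDegree = m + 2 := by
      have hd : P.degree = ((m + 2 : ℕ) : WithBot ℕ) := by
        rw [hPdef, degree_sub_eq_left_of_degree_lt hsd2, hXqdeg']
      exact natDegree_eq_of_degree_eq_some hd
    have hq_next : q.coeff m = -(∑ j, a j) := by
      have h := prod_X_sub_C_nextCoeff (s := (Finset.univ : Finset (Fin (m + 1)))) a
      rw [nextCoeff_of_natDegree_pos (by rw [hqdeg]; omega), hqdeg] at h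
      simpa using h
    have hnext : P.nextCoeff = -(∑ j, a j) := by
      rw [nextCoeff_of_natDegree_pos (by rw [hPdeg]; omega), hPdeg]
      have hid : m + 2 - 1 = m + 1 := by omega
      rw [hid, hPdef, coeff_sub, coeff_X_mul,
        coeff_eq_zero_of_degree_lt hsum_deg, hq_next]
      ring
    have hroots : ∀ i : Fin (m + 2), P.IsRoot (l i) := by
      intro i
      have heval : P.eval (l i) = (∏ j, (l i - a j)) * (l i + ∑ j, w j / (a j - l i)) := by
        have hterm : ∀ j : Fin (m + 1), (∏ k, (l i - a k)) * (w j / (a j - l i))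
            = -(w j * ∏ k ∈ Finset.univ.erase j, (l i - a k)) := by
          intro j
          rw [← Finset.mul_prod_erase _ _ (Finset.mem_univ j)]
          have h5 : a j - l i ≠ 0 := sub_ne_zero.2 fun h => (hne i j) h.symm
          field_simp
          ring
        rw [hPdef]
        simp only [eval_sub, eval_mul, eval_prod, eval_finset_sum, eval_X, eval_C]
        rw [mul_add, Finset.mul_sum]
        simp only [hterm]
        rw [Finset.sum_neg_distrib, hq]
        simp only [eval_prod, eval_sub, eval_X, eval_C]
        ring
      rw [IsRoot, heval, hl0 i, mul_zero]
    have hPne : P ≠ 0 := hPm.ne_zero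
    have hmap_le : (Finset.univ.val.map l) ≤ P.roots := by
      rw [Multiset.le_iff_subset (Multiset.Nodup.map hls.injective Finset.univ.nodup)]
      intro x hx
      obtain ⟨i, _, rfl⟩ := Multiset.mem_map.1 hx
      exact Polynomial.mem_roots'.2 ⟨hPne, hroots i⟩
    have hcard2 : Multiset.card P.roots ≤ m + 2 := by
      simpa [hPdeg] using P.card_roots'
    have hroots_eq : P.roots = Finset.univ.val.map l :=
      (Multiset.eq_of_le_of_card_le hmap_le (by simpa using hcard2)).symm
    have hsplits : P.Splits := by
      rw [Polynomial.splits_iff_card_roots, hroots_eq, hPdeg]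
      simp
    have hsum := hsplits.nextCoeff_eq_neg_sum_roots_of_monic hPm
    rw [hnext, hroots_eq] at hsum
    have hms : (Finset.univ.val.map l).sum = ∑ i, l i := rfl
    rw [hms] at hsum
    linarith
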